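/- For the quadratic form Q = [0,1,0] (i.e. Q(x,y) = xy) and any positive integer m, the function j_{m,Q}(iy) = j_m(iy) - 2 sinh(2πmy) - 2 sinh(2πm/y) satisfies lim_{y→0⁺} j_{m,Q}(iy)/y = -4πm. -/

import Mathlib

open scoped Real
open Complex

/-- The special linear group `SL(2, ℤ)`. -/
abbrev SL2Z := Matrix.SpecialLinearGroup (Fin 2) ℤ

/-- Evaluation of the binary quadratic form `[a,b,c]` at `(x,y)`. -/
def evalQF (Q : ℤ × ℤ × ℤ) (x y : ℤ) : ℤ := Q.1 * x ^ 2 + Q.2.1 * x * y + Q.2.2 * y ^ 2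

/-- Discriminant of a binary quadratic form. -/
def discQF (Q : ℤ × ℤ × ℤ) : ℤ := Q.2.1 ^ 2 - 4 * Q.1 * Q.2.2

/-- Action of `SL(2,ℤ)` on binary quadratic forms: `(γQ)(x,y) = Q(Dx - By, -Cx + Ay)`. -/
def actQF (γ : SL2Z) (Q : ℤ × ℤ × ℤ) : ℤ × ℤ × ℤ :=
  (Q.1 * (γ.1 1 1) ^ 2 - Q.2.1 * (γ.1 1 0) * (γ.1 1 1) + Q.2.2 * (γ.1 1 0) ^ 2,
   -2 * Q.1 * (γ.1 0 1) * (γ.1 1 1) + Q.2.1 * ((γ.1 0 0) * (γ.1 1 1) + (γ.1 0 1) * (γ.1 1 0))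
     - 2 * Q.2.2 * (γ.1 0 0) * (γ.1 1 0),
   Q.1 * (γ.1 0 1) ^ 2 - Q.2.1 * (γ.1 0 0) * (γ.1 0 1) + Q.2.2 * (γ.1 0 0) ^ 2)

/-- Two forms are `PSL₂(ℤ)`-equivalent. -/
def EquivQF (Q Q' : ℤ × ℤ × ℤ) : Prop := ∃ γ : SL2Z, actQF γ Q = Q'

/-- Two forms are `Γ∞`-equivalent. -/
def GammaInfEquivQF (Q Q' : ℤ × ℤ × ℤ) : Prop :=
  ∃ γ : SL2Z, γ.1 1 0 = 0 ∧ actQF γ Q = Q'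

lemma actQF_one (Q : ℤ × ℤ × ℤ) : actQF 1 Q = Q := by
  obtain ⟨a, b, c⟩ := Q
  simp [actQF, Matrix.SpecialLinearGroup.coe_one, Matrix.one_apply]

lemma actQF_mul (γ δ : SL2Z) (Q : ℤ × ℤ × ℤ) :
    actQF (γ * δ) Q = actQF γ (actQF δ Q) := by
  obtain ⟨a, b, c⟩ := Q
  simp only [actQF, Matrix.SpecialLinearGroup.coe_mul, Matrix.mul_apply, Fin.sum_univ_two,
    Prod.mk.injEq]
  refine ⟨by ring, by ring, by ring⟩

lemma SL2Z_inv_c (γ : SL2Z) : (γ⁻¹).1 1 0 = -(γ.1 1 0) := by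
  rw [Matrix.SpecialLinearGroup.coe_inv, Matrix.adjugate_fin_two]
  simp

lemma discQF_actQF (γ : SL2Z) (Q : ℤ × ℤ × ℤ) : discQF (actQF γ Q) = discQF Q := by
  have h := γ.2
  rw [Matrix.det_fin_two] at h
  obtain ⟨a, b, c⟩ := Q
  simp only [discQF, actQF]
  linear_combination (γ.1 0 0 * γ.1 1 1 - γ.1 0 1 * γ.1 1 0 + 1) * (b ^ 2 - 4 * a * c) * h

/-- `Γ∞ ≤ SL(2,ℤ)`: matrices with lower-left entry zero. -/
def GammaInf : Subgroup SL2Z where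
  carrier := {γ | γ.1 1 0 = 0}
  one_mem' := by simp [Matrix.SpecialLinearGroup.coe_one, Matrix.one_apply]
  mul_mem' := by
    intro γ δ hγ hδ
    simp only [Set.mem_setOf_eq, Matrix.SpecialLinearGroup.coe_mul, Matrix.mul_apply,
      Fin.sum_univ_two] at *
    rw [hδ] at *
    simp [hγ, hδ]
  inv_mem' := by
    intro γ hγ
    simp only [Set.mem_setOf_eq] at *
    rw [SL2Z_inv_c, hγ, neg_zero]

/-- Möbius action of `SL(2,ℤ)` on `ℂ`. -/
noncomputable def moeb (γ : SL2Z) (τ : ℂ) : ℂ :=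
  ((γ.1 0 0 : ℂ) * τ + (γ.1 0 1 : ℂ)) / ((γ.1 1 0 : ℂ) * τ + (γ.1 1 1 : ℂ))

/-- `e(x) = e^{2πix}`. -/
noncomputable def ee (x : ℝ) : ℂ := Complex.exp (2 * π * Complex.I * x)

/-- `ε_a`. -/
noncomputable def epsFactor (a : ℕ) : ℂ := if a % 4 = 1 then 1 else Complex.I

/-- The modified Kloosterman sum `K⁺(d, D; 4c)`. -/
noncomputable def KloostermanPlus (d D : ℤ) (c : ℕ) : ℂ :=
  (1 - Complex.I) * (if c % 2 = 0 then 1 else 2) *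
    ∑ a ∈ Finset.range (4 * c), if Nat.gcd a (4 * c) = 1 then
      (jacobiSym (4 * c : ℤ) a : ℂ) * epsFactor a *
        ee (((d * a + D * ((a ^ (Nat.totient (4 * c) - 1)) % (4 * c) : ℕ) : ℤ) : ℝ) / (4 * c))
    else 0

/-- The Kronecker symbol `(D/n)`. -/
def kron (D : ℤ) (n : ℕ) : ℤ :=
  (if D % 2 = 0 then 0 else if D % 8 = 1 ∨ D % 8 = 7 then 1 else -1) ^ (n.factorization 2) *
    jacobiSym D (n / 2 ^ (n.factorization 2))

/-- `D` is a positive fundamental discriminant. -/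
def IsFundDisc (D : ℤ) : Prop :=
  0 < D ∧ ((D % 4 = 1 ∧ Squarefree D) ∨
    (D % 4 = 0 ∧ Squarefree (D / 4) ∧ ((D / 4) % 4 = 2 ∨ (D / 4) % 4 = 3)))

/-- The modified Bessel function of the first kind `I_ν`, of a real argument. -/
noncomputable def besselI (ν : ℂ) (x : ℝ) : ℂ :=
  ∑' k : ℕ, ((x : ℂ) / 2) ^ (ν + 2 * k) / ((Nat.factorial k : ℂ) * Complex.Gamma (ν + k + 1))

/-- The Bessel function of the first kind `J_ν`, of a real argument. -/
noncomputable def besselJ (ν : ℂ) (x : ℝ) : ℂ :=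
  ∑' k : ℕ, (-1) ^ k * ((x : ℂ) / 2) ^ (ν + 2 * k) /
    ((Nat.factorial k : ℂ) * Complex.Gamma (ν + k + 1))

/-- The `c`-th term of the Kloosterman–Bessel series `b(d,D,s)`. -/
noncomputable def bterm (d D : ℤ) (s : ℂ) (c : ℕ) : ℂ :=
  if d * D ≠ 0 then
    KloostermanPlus d D c * (2 : ℂ) ^ (-(3 : ℂ) / 2) * (π : ℂ) *
      ((d * D : ℤ) : ℂ) ^ ((1 : ℂ) / 4) * (c : ℂ)⁻¹ *
      besselJ (2 * s - 1) (π * Real.sqrt ((d * D : ℤ) : ℝ) / c)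
  else if d + D ≠ 0 then
    KloostermanPlus d D c * (2 : ℂ) ^ (-(4 : ℂ) * s) * (π : ℂ) ^ (s + 1 / 4) *
      ((d + D : ℤ) : ℂ) ^ (s - 1 / 4) * (c : ℂ) ^ (-2 * s)
  else
    KloostermanPlus 0 0 c * (2 : ℂ) ^ ((1 : ℂ) / 2 - 6 * s) * (π : ℂ) ^ ((1 : ℂ) / 2) *
      Complex.Gamma (2 * s) * (c : ℂ) ^ (-2 * s)

/-- The coefficient function `b(d, D, s)`. -/
noncomputable def bcoef (d D : ℤ) (s : ℂ) : ℂ := ∑' c : ℕ, bterm d D s (c + 1)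

/-- The Dirichlet `L`-function `L_D(s)`. -/
noncomputable def LDir (D : ℤ) (s : ℂ) : ℂ :=
  ∑' n : ℕ, (kron D (n + 1) : ℂ) * ((n + 1 : ℕ) : ℂ) ^ (-s)

/-- `σ_w(m) = Σ_{n ∣ m} n^w`. -/
noncomputable def sigmaC (w : ℂ) (m : ℕ) : ℂ := ∑ n ∈ m.divisors, (n : ℂ) ^ w

/-- `φ_{m,s}(y) = 2π m^{1/2} y^{1/2} I_{s-1/2}(2πmy)`. -/
noncomputable def phiMS (m : ℕ) (s : ℂ) (y : ℝ) : ℂ :=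
  2 * π * Real.sqrt (m * y) * besselI (s - 1 / 2) (2 * π * m * y)

/-- The cosets in `Γ∞\Γ` corresponding to the (rational or infinite) roots of `Q`. -/
def rootCosets (Q : ℤ × ℤ × ℤ) : Set (Quotient (QuotientGroup.rightRel GammaInf)) :=
  {q | ∃ (γ : SL2Z) (r s : ℤ), q = Quotient.mk _ γ ∧ γ.1 1 0 = s ∧ γ.1 1 1 = -r ∧
    evalQF Q r s = 0}

/-- `Γ`-equivalence as a setoid on forms of discriminant `d`. -/
def sGQ (d : ℤ) : Setoid {Q : ℤ × ℤ × ℤ // discQF Q = d} where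
  r Q Q' := ∃ γ : SL2Z, actQF γ Q.val = Q'.val
  iseqv := by
    constructor
    · exact fun Q => ⟨1, actQF_one Q.val⟩
    · rintro Q Q' ⟨γ, hγ⟩
      exact ⟨γ⁻¹, by rw [← hγ, ← actQF_mul, inv_mul_cancel, actQF_one]⟩
    · rintro Q Q' Q'' ⟨γ, hγ⟩ ⟨δ, hδ⟩
      exact ⟨δ * γ, by rw [actQF_mul, hγ, hδ]⟩

/-- `Γ∞`-equivalence as a setoid on forms of discriminant `d`. -/
def sGIQ (d : ℤ) : Setoid {Q : ℤ × ℤ × ℤ // discQF Q = d} where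
  r Q Q' := ∃ γ : SL2Z, γ.1 1 0 = 0 ∧ actQF γ Q.val = Q'.val
  iseqv := by
    constructor
    · exact fun Q => ⟨1, by simp [Matrix.SpecialLinearGroup.coe_one, Matrix.one_apply],
        actQF_one Q.val⟩
    · rintro Q Q' ⟨γ, hc, hγ⟩
      exact ⟨γ⁻¹, by rw [SL2Z_inv_c, hc, neg_zero],
        by rw [← hγ, ← actQF_mul, inv_mul_cancel, actQF_one]⟩
    · rintro Q Q' Q'' ⟨γ, hcγ, hγ⟩ ⟨δ, hcδ, hδ⟩
      refine ⟨δ * γ, ?_, by rw [actQF_mul, hγ, hδ]⟩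
      simp [Matrix.SpecialLinearGroup.coe_mul, Matrix.mul_apply, Fin.sum_univ_two, hcγ, hcδ]

/-- for `Q = [0,1,0]`, `lim_{y→0⁺} j_{m,Q}(iy)/y = -4πm`. -/
-- aux: for c > 0, exp(-(c/y))/y → 0 as y → 0+
lemma aux_exp_div (c : ℝ) (hc : 0 < c) :
    Filter.Tendsto (fun y : ℝ => Real.exp (-(c / y)) / y)
      (nhdsWithin 0 (Set.Ioi 0)) (nhds 0) := by
  have h1 : Filter.Tendsto (fun t : ℝ => t * Real.exp (-(c * t))) Filter.atTop (nhds 0) := by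
    have h2 := Real.tendsto_pow_mul_exp_neg_atTop_nhds_zero 1
    have h3 : Filter.Tendsto (fun t : ℝ => c * t) Filter.atTop Filter.atTop :=
      Filter.Tendsto.const_mul_atTop hc Filter.tendsto_id
    have := (h2.comp h3).const_mul c⁻¹
    simp only [mul_zero] at this
    refine this.congr fun t => ?_
    simp only [Function.comp, pow_one]
    field_simp
  have h4 := h1.comp tendsto_inv_nhdsGT_zero
  refine h4.congr fun y => ?_
  simp only [Function.comp]
  rw [div_eq_mul_inv, div_eq_mul_inv]
  ring_nf

theorem stmt4 (m : ℕ) (hm : 1 ≤ m) (jm : ℂ → ℂ) (c : ℕ → ℂ)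
    (hsum : ∀ t : ℝ, 0 < t → Summable (fun n : ℕ => ‖c n‖ * Real.exp (-2 * π * (n + 1) * t)))
    (hexp : ∀ τ : ℂ, 0 < τ.im →
      jm τ = Complex.exp (-2 * π * Complex.I * m * τ) +
        ∑' n : ℕ, c n * Complex.exp (2 * π * Complex.I * (n + 1) * τ))
    (hinv : ∀ τ : ℂ, 0 < τ.im → jm (-1 / τ) = jm τ) :
    Filter.Tendsto
      (fun y : ℝ =>
        (jm (Complex.I * y) - 2 * (Real.sinh (2 * π * m * y) : ℂ)
          - 2 * (Real.sinh (2 * π * m / y) : ℂ)) / (y : ℂ))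
      (nhdsWithin 0 (Set.Ioi 0)) (nhds (-4 * π * m)) := by
  have hπ := Real.pi_pos
  have hm' : (0:ℝ) < m := by exact_mod_cast hm
  -- main identity
  have hmain : ∀ y : ℝ, 0 < y →
      jm (Complex.I * y) - 2 * (Real.sinh (2 * π * m / y) : ℂ)
        = Complex.exp ((-(2*π*m/y) : ℝ) : ℂ)
          + ∑' n : ℕ, c n * Complex.exp ((-(2*π*(n+1)/y) : ℝ) : ℂ) := by
    intro y hy
    have hyne : (y:ℂ) ≠ 0 := by exact_mod_cast hy.ne'
    have h1 : jm (Complex.I * y) = jm (Complex.I * ((y⁻¹ : ℝ) : ℂ)) := by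
      have h := hinv (Complex.I * y) (by simp [hy])
      rw [← h]
      congr 1
      push_cast
      field_simp
      linear_combination (-1:ℂ) * Complex.I_sq
    have him : (0:ℝ) < (Complex.I * ((y⁻¹ : ℝ) : ℂ)).im := by
      simp [inv_pos.mpr hy]
    rw [h1, hexp _ him]
    have harg1 : Complex.exp (-2 * π * Complex.I * m * (Complex.I * ((y⁻¹ : ℝ) : ℂ)))
        = Complex.exp (((2*π*m/y) : ℝ) : ℂ) := by
      congr 1
      push_cast
      rw [div_eq_mul_inv]
      linear_combination (-(2*π*(m:ℂ)*((y:ℂ))⁻¹)) * Complex.I_sq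
    have harg2 : ∀ n : ℕ, Complex.exp (2 * π * Complex.I * (n + 1) * (Complex.I * ((y⁻¹ : ℝ) : ℂ)))
        = Complex.exp ((-(2*π*(n+1)/y) : ℝ) : ℂ) := by
      intro n
      congr 1
      push_cast
      rw [div_eq_mul_inv]
      linear_combination (2*π*((n:ℂ)+1)*((y:ℂ))⁻¹) * Complex.I_sq
    rw [harg1, tsum_congr (fun n => by rw [harg2 n])]
    have hsinh : (2 : ℂ) * (Real.sinh (2 * π * m / y) : ℂ)
        = Complex.exp (((2*π*m/y) : ℝ) : ℂ) - Complex.exp ((-(2*π*m/y) : ℝ) : ℂ) := by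
      rw [Complex.ofReal_sinh, Complex.ofReal_neg, ← Complex.two_sinh]
    rw [hsinh]
    ring
  -- piece a
  have ha : Filter.Tendsto (fun y : ℝ => Complex.exp ((-(2*π*m/y) : ℝ) : ℂ) / (y:ℂ))
      (nhdsWithin 0 (Set.Ioi 0)) (nhds 0) := by
    apply squeeze_zero_norm' ?_ (aux_exp_div (2*π*m) (by positivity))
    filter_upwards [self_mem_nhdsWithin] with y hy
    have hy : (0:ℝ) < y := hy
    rw [norm_div, ← Complex.ofReal_exp, Complex.norm_real, Complex.norm_real,
      Real.norm_eq_abs, Real.norm_eq_abs, abs_of_pos (Real.exp_pos _), abs_of_pos hy]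
  -- summable at 1
  have hS1 : Summable (fun n : ℕ => ‖c n‖ * Real.exp (-2*π*(n+1))) := by
    refine (hsum 1 one_pos).congr fun n => by rw [mul_one]
  set S : ℝ := ∑' n : ℕ, ‖c n‖ * Real.exp (-2*π*(n+1)) with hSdef
  -- piece b
  have hb : Filter.Tendsto
      (fun y : ℝ => (∑' n : ℕ, c n * Complex.exp ((-(2*π*(n+1)/y) : ℝ) : ℂ)) / (y:ℂ))
      (nhdsWithin 0 (Set.Ioi 0)) (nhds 0) := by
    have hB : Filter.Tendsto (fun y : ℝ => (Real.exp (2*π) * S) * (Real.exp (-(2*π/y)) / y))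
        (nhdsWithin 0 (Set.Ioi 0)) (nhds 0) := by
      have := (aux_exp_div (2*π) (by positivity)).const_mul (Real.exp (2*π) * S)
      simpa using this
    apply squeeze_zero_norm' ?_ hB
    filter_upwards [Ioo_mem_nhdsGT_of_mem (by norm_num : (0:ℝ) ∈ Set.Ico 0 1)] with y hy
    obtain ⟨hy0, hy1⟩ := hy
    have hu : 1 ≤ 1/y := by rw [le_div_iff₀ hy0]; linarith
    have hnorm : ∀ n : ℕ, ‖c n * Complex.exp ((-(2*π*(n+1)/y) : ℝ) : ℂ)‖
        = ‖c n‖ * Real.exp (-(2*π*(n+1)/y)) := by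
      intro n
      rw [norm_mul, ← Complex.ofReal_exp, Complex.norm_real, Real.norm_eq_abs,
        abs_of_pos (Real.exp_pos _)]
    have hsum' : Summable (fun n : ℕ => ‖c n‖ * Real.exp (-(2*π*(n+1)/y))) := by
      refine (hsum y⁻¹ (inv_pos.mpr hy0)).congr fun n => ?_
      rw [div_eq_mul_inv]
      ring_nf
    have hterm : ∀ n : ℕ, ‖c n‖ * Real.exp (-(2*π*(n+1)/y))
        ≤ (‖c n‖ * Real.exp (-2*π*(n+1))) * (Real.exp (2*π) * Real.exp (-(2*π/y))) := by
      intro n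
      have hn0 : (0:ℝ) ≤ 2*π*n := by positivity
      have key : -(2*π*(n+1)/y) ≤ -2*π*(n+1) + 2*π + -(2*π/y) := by
        have h1 : (0:ℝ) ≤ 2*π*n * (1/y - 1) := mul_nonneg hn0 (by linarith)
        have h2 : 2*π*(n+1)/y - 2*π/y = 2*π*n*(1/y) := by ring
        nlinarith [h2]
      calc ‖c n‖ * Real.exp (-(2*π*(n+1)/y))
          ≤ ‖c n‖ * Real.exp (-2*π*(n+1) + 2*π + -(2*π/y)) := by
            exact mul_le_mul_of_nonneg_left (Real.exp_le_exp.mpr key) (norm_nonneg _)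
        _ = (‖c n‖ * Real.exp (-2*π*(n+1))) * (Real.exp (2*π) * Real.exp (-(2*π/y))) := by
            rw [Real.exp_add, Real.exp_add]; ring
    have hrhs : Summable (fun n : ℕ =>
        (‖c n‖ * Real.exp (-2*π*(n+1))) * (Real.exp (2*π) * Real.exp (-(2*π/y)))) :=
      hS1.mul_right _
    have hbound : ‖∑' n : ℕ, c n * Complex.exp ((-(2*π*(n+1)/y) : ℝ) : ℂ)‖
        ≤ S * (Real.exp (2*π) * Real.exp (-(2*π/y))) := by
      calc ‖∑' n : ℕ, c n * Complex.exp ((-(2*π*(n+1)/y) : ℝ) : ℂ)‖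
          ≤ ∑' n : ℕ, ‖c n * Complex.exp ((-(2*π*(n+1)/y) : ℝ) : ℂ)‖ :=
            norm_tsum_le_tsum_norm (by refine hsum'.congr fun n => (hnorm n).symm)
        _ = ∑' n : ℕ, ‖c n‖ * Real.exp (-(2*π*(n+1)/y)) := tsum_congr hnorm
        _ ≤ ∑' n : ℕ, (‖c n‖ * Real.exp (-2*π*(n+1))) * (Real.exp (2*π) * Real.exp (-(2*π/y)))
            := Summable.tsum_le_tsum hterm hsum' hrhs
        _ = S * (Real.exp (2*π) * Real.exp (-(2*π/y))) := tsum_mul_right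
    rw [norm_div, Complex.norm_real, Real.norm_eq_abs, abs_of_pos hy0]
    calc ‖∑' n : ℕ, c n * Complex.exp ((-(2*π*(n+1)/y) : ℝ) : ℂ)‖ / y
        ≤ (S * (Real.exp (2*π) * Real.exp (-(2*π/y)))) / y := by
          exact div_le_div_of_nonneg_right hbound hy0.le
      _ = Real.exp (2*π) * S * (Real.exp (-(2*π/y)) / y) := by ring
  -- piece c
  have hc : Filter.Tendsto (fun y : ℝ => 2 * ((Real.sinh (2*π*m*y) : ℝ) : ℂ) / (y:ℂ))
      (nhdsWithin 0 (Set.Ioi 0)) (nhds ((4*π*m : ℝ) : ℂ)) := by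
    have hd : HasDerivAt (fun y : ℝ => Real.sinh (2*π*m*y)) (2*π*m) 0 := by
      have := (Real.hasDerivAt_sinh (2*π*m*0)).comp 0 ((hasDerivAt_id (0:ℝ)).const_mul (2*π*m))
      simpa [Function.comp_def] using this
    have hslope := hasDerivAt_iff_tendsto_slope.mp hd
    have hr0 : Filter.Tendsto (fun y : ℝ => Real.sinh (2*π*m*y) / y)
        (nhdsWithin 0 (Set.Ioi 0)) (nhds (2*π*m)) := by
      have hmono : nhdsWithin (0:ℝ) (Set.Ioi 0) ≤ nhdsWithin 0 {(0:ℝ)}ᶜ :=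
        nhdsWithin_mono 0 (fun y hy => by simpa using (ne_of_gt hy))
      refine (hslope.mono_left hmono).congr fun y => ?_
      simp [slope_def_field]
    have hr : Filter.Tendsto (fun y : ℝ => 2 * Real.sinh (2*π*m*y) / y)
        (nhdsWithin 0 (Set.Ioi 0)) (nhds (4*π*m)) := by
      have h2 := hr0.const_mul (2:ℝ)
      rw [show (2:ℝ) * (2*π*m) = 4*π*m by ring] at h2
      exact h2.congr fun y => (mul_div_assoc _ _ _).symm
    have hcc := (Complex.continuous_ofReal.tendsto _).comp hr
    refine hcc.congr fun y => ?_
    simp only [Function.comp_apply]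
    push_cast
    ring
  -- assemble
  have hG := (ha.add hb).sub hc
  rw [show ((0:ℂ) + 0 - ((4*π*m : ℝ) : ℂ)) = -4*(π:ℂ)*m by push_cast; ring] at hG
  refine Filter.Tendsto.congr' ?_ hG
  filter_upwards [self_mem_nhdsWithin] with y hy
  have hy : (0:ℝ) < y := hy
  have h := hmain y hy
  have hrw : jm (Complex.I * y) - 2 * (Real.sinh (2 * π * m * y) : ℂ)
      - 2 * (Real.sinh (2 * π * m / y) : ℂ)
      = (Complex.exp ((-(2*π*m/y) : ℝ) : ℂ)
        + ∑' n : ℕ, c n * Complex.exp ((-(2*π*(n+1)/y) : ℝ) : ℂ))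
        - 2 * (Real.sinh (2*π*m*y) : ℂ) := by
    rw [← h]; ring
  rw [hrw]
  ring
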